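/- Let S = (C × C)/G be a mixed surface with p_g = q = 1, so that |G°| = (g(C)-1)²/2 and 2g(C) - 2 = |G°|·Σ_{j=1}^s (1 - 1/n_j) with all n_j ≥ 2 integers. Then (g(C), n, |G|) is one of: (5, (2,2), 16), (7, (3), 36), (9, (2), 64); in particular g(C) ∈ {5,7,9}. -/

import Mathlib

open scoped commutatorElement

/-- For a mixed surface `S = (C × C)/G` with `p_g = q = 1` (so `|G| = (g(C)-1)²`,
`G°` of index 2 with a generating vector of type `(1 | n₁,…,n_s)` satisfying the
Riemann–Hurwitz relation and the freeness conditions `(M1)`, `(M2)`), the data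
`(g(C), n, |G|)` is one of `(5, (2,2), 16)`, `(7, (3), 36)`, `(9, (2), 64)`. -/
theorem mixed_classification {G : Type*} [Group G] [Finite G]
    (G₀ : Subgroup G) (hidx : G₀.index = 2)
    (gC : ℕ) (hcard : Nat.card G = (gC - 1) ^ 2)
    (s : ℕ) (hs : 1 ≤ s) (n : Fin s → ℕ) (hn : ∀ j, 2 ≤ n j)
    (l : Fin s → G) (h₁ h₂ : G)
    (hl : ∀ j, l j ∈ G₀) (hh₁ : h₁ ∈ G₀) (hh₂ : h₂ ∈ G₀)
    (hord : ∀ j, orderOf (l j) = n j)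
    (hrel : (List.ofFn l).prod * ⁅h₁, h₂⁆ = 1)
    (hgen : Subgroup.closure ({h₁, h₂} ∪ Set.range l) = G₀)
    (hRH : 2 * (gC : ℚ) - 2 = (Nat.card G₀ : ℚ) * ∑ j, (1 - 1 / (n j : ℚ)))
    (hM1 : ∀ g : G, g ∉ G₀ → ∀ i j, l i ≠ g * l j * g⁻¹)
    (hM2 : ∀ g : G, g ∉ G₀ → ∀ j, ∀ σ ∈ G₀, g ^ 2 ∉ Subgroup.zpowers (σ * l j * σ⁻¹)) :
    (gC = 5 ∧ s = 2 ∧ (∀ j, n j = 2) ∧ Nat.card G = 16) ∨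
    (gC = 7 ∧ s = 1 ∧ (∀ j, n j = 3) ∧ Nat.card G = 36) ∨
    (gC = 9 ∧ s = 1 ∧ (∀ j, n j = 2) ∧ Nat.card G = 64) := by
  have hNpos : 0 < Nat.card G₀ := Nat.card_pos
  have hcard2 : Nat.card G = 2 * Nat.card G₀ := by
    rw [← G₀.index_mul_card, hidx]
  set N := Nat.card G₀ with hN
  set m := gC - 1 with hmdef
  have hm : m ^ 2 = 2 * N := by omega
  have hmpos : 0 < m := by nlinarith
  have hgC : gC = m + 1 := by omega
  have hmeven : m % 2 = 0 := by
    have h2 : (2:ℕ).Prime := Nat.prime_two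
    have : 2 ∣ m := h2.dvd_of_dvd_pow (n := 2) ⟨N, hm⟩
    omega
  -- basic term bounds
  have hnq : ∀ j, (2:ℚ) ≤ (n j : ℚ) := fun j => by exact_mod_cast hn j
  have hterm_lb : ∀ j, (1:ℚ)/2 ≤ 1 - 1/(n j : ℚ) := fun j => by
    have h2 := hnq j
    have : 1/(n j : ℚ) ≤ 1/2 := by
      apply one_div_le_one_div_of_le <;> linarith
    linarith
  have hterm_ub1 : ∀ j, 1 - 1/(n j : ℚ) < 1 := fun j => by
    have h2 := hnq j
    have : 0 < 1/(n j : ℚ) := by positivity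
    linarith
  set Ssum := ∑ j, (1 - 1/(n j : ℚ)) with hSsum
  have hne : (Finset.univ : Finset (Fin s)).Nonempty := by
    rw [Finset.univ_nonempty_iff]
    exact Fin.pos_iff_nonempty.mp hs
  have hSlb : (s:ℚ)/2 ≤ Ssum := by
    rw [hSsum]
    calc (s:ℚ)/2 = ∑ _j : Fin s, (1:ℚ)/2 := by
          rw [Finset.sum_const, nsmul_eq_mul, Finset.card_univ, Fintype.card_fin]; ring
      _ ≤ _ := Finset.sum_le_sum fun j _ => hterm_lb j
  have hSub : Ssum < s := by
    rw [hSsum]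
    calc ∑ j, (1 - 1/(n j : ℚ)) < ∑ _j : Fin s, (1:ℚ) :=
          Finset.sum_lt_sum_of_nonempty hne (fun j _ => hterm_ub1 j)
      _ = s := by rw [Finset.sum_const, nsmul_eq_mul, Finset.card_univ, Fintype.card_fin]; ring
  have hm0 : (0:ℚ) < m := by exact_mod_cast hmpos
  have hsq1 : (1:ℚ) ≤ s := by exact_mod_cast hs
  have key : (m:ℚ) * Ssum = 4 := by
    have h1 : 2*(m:ℚ) = N * Ssum := by
      rw [hgC] at hRH; push_cast at hRH; linarith
    have h2 : (m:ℚ)^2 = 2*N := by exact_mod_cast hm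
    have h3 : (m:ℚ) * ((m:ℚ) * Ssum) = (m:ℚ) * 4 := by
      linear_combination Ssum * h2 - 2 * h1
    exact mul_left_cancel₀ (ne_of_gt hm0) h3
  have hm8 : m ≤ 8 := by
    have hq : (m:ℚ) ≤ 8 := by nlinarith
    exact_mod_cast hq
  -- per-term bounds
  have hperterm : ∀ j, Ssum - ((s:ℚ) - 1) ≤ 1 - 1/(n j : ℚ) ∧
      1 - 1/(n j : ℚ) ≤ Ssum - ((s:ℚ) - 1)/2 := by
    intro j
    have hsplit : (1 - 1/(n j : ℚ)) + ∑ i ∈ Finset.univ.erase j, (1 - 1/(n i : ℚ)) = Ssum := by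
      rw [hSsum]
      exact Finset.add_sum_erase _ (fun i => 1 - 1/(n i : ℚ)) (Finset.mem_univ j)
    have hcardq : ((Finset.univ.erase j).card : ℚ) = (s:ℚ) - 1 := by
      rw [Finset.card_erase_of_mem (Finset.mem_univ j), Finset.card_univ, Fintype.card_fin]
      push_cast [Nat.cast_sub hs]
      ring
    have hlow : ((s:ℚ) - 1)/2 ≤ ∑ i ∈ Finset.univ.erase j, (1 - 1/(n i : ℚ)) := by
      calc ((s:ℚ)-1)/2 = ∑ _i ∈ Finset.univ.erase j, (1:ℚ)/2 := by
            rw [Finset.sum_const, nsmul_eq_mul, hcardq]; ring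
        _ ≤ _ := Finset.sum_le_sum fun i _ => hterm_lb i
    have hhigh : ∑ i ∈ Finset.univ.erase j, (1 - 1/(n i : ℚ)) ≤ (s:ℚ) - 1 := by
      calc ∑ i ∈ Finset.univ.erase j, (1 - 1/(n i : ℚ))
          ≤ ∑ _i ∈ Finset.univ.erase j, (1:ℚ) :=
            Finset.sum_le_sum fun i _ => le_of_lt (hterm_ub1 i)
        _ = (s:ℚ) - 1 := by rw [Finset.sum_const, nsmul_eq_mul, hcardq]; ring
    constructor <;> linarith
  -- case m = 2 is excluded by (M2)
  have hm_ne2 : m ≠ 2 := by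
    intro hm2
    have hmsq : m ^ 2 = 4 := by rw [hm2]; norm_num
    have hN2 : N = 2 := by omega
    have hG₀top : G₀ ≠ ⊤ := by
      intro h
      rw [h, Subgroup.index_top] at hidx
      omega
    obtain ⟨g, hg⟩ : ∃ g : G, g ∉ G₀ := by
      by_contra h
      push_neg at h
      exact hG₀top (eq_top_iff.mpr fun x _ => h x)
    have hgsq : g ^ 2 ∈ G₀ := Subgroup.sq_mem_of_index_two hidx g
    set j : Fin s := ⟨0, hs⟩
    have hzle : Subgroup.zpowers (l j) ≤ G₀ := Subgroup.zpowers_le.mpr (hl j)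
    have hzcard : N ≤ Nat.card (Subgroup.zpowers (l j)) := by
      rw [Nat.card_zpowers, hord j, hN2]
      exact hn j
    have hzeq : Subgroup.zpowers (l j) = G₀ := Subgroup.eq_of_le_of_card_ge hzle hzcard
    have hcontra := hM2 g hg j 1 (one_mem G₀)
    rw [one_mul, inv_one, mul_one, hzeq] at hcontra
    exact hcontra hgsq
  -- now m ∈ {4, 6, 8}
  have hmcase : m = 4 ∨ m = 6 ∨ m = 8 := by omega
  rcases hmcase with hm4 | hm6 | hm8'
  · -- m = 4 : gC = 5, s = 2, n ≡ 2, |G| = 16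
    left
    have hSval : Ssum = 1 := by
      rw [hm4] at key; push_cast at key; linarith
    have hs2 : s = 2 := by
      have h1 : (s:ℚ) ≤ 2 := by linarith
      have h2 : (s:ℚ) < 3 := by linarith
      have h3 : s < 3 := by exact_mod_cast h2
      have h4 : (1:ℚ) < s := by linarith
      have h5 : 1 < s := by exact_mod_cast h4
      omega
    have hmsq : m ^ 2 = 16 := by rw [hm4]; norm_num
    refine ⟨by omega, hs2, fun j => ?_, by omega⟩
    obtain ⟨hlo, hhi⟩ := hperterm j
    rw [hSval, hs2] at hhi
    push_cast at hhi
    have h2 := hterm_lb j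
    have heq : 1 - 1/(n j : ℚ) = 1/2 := by linarith
    have hnj0 : (n j : ℚ) ≠ 0 := by have := hnq j; linarith
    have hv : (n j : ℚ) = 2 := by field_simp at heq; linarith
    exact_mod_cast hv
  · -- m = 6 : gC = 7, s = 1, n ≡ 3, |G| = 36
    right; left
    have hSval : Ssum = 2/3 := by
      rw [hm6] at key; push_cast at key; linarith
    have hs1 : s = 1 := by
      have h2 : (s:ℚ) < 2 := by linarith
      have h3 : s < 2 := by exact_mod_cast h2
      omega
    have hmsq : m ^ 2 = 36 := by rw [hm6]; norm_num
    refine ⟨by omega, hs1, fun j => ?_, by omega⟩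
    obtain ⟨hlo, hhi⟩ := hperterm j
    rw [hSval, hs1] at hlo hhi
    push_cast at hlo hhi
    have heq : 1 - 1/(n j : ℚ) = 2/3 := by linarith
    have hnj0 : (n j : ℚ) ≠ 0 := by have := hnq j; linarith
    have hv : (n j : ℚ) = 3 := by field_simp at heq; linarith
    exact_mod_cast hv
  · -- m = 8 : gC = 9, s = 1, n ≡ 2, |G| = 64
    right; right
    have hSval : Ssum = 1/2 := by
      rw [hm8'] at key; push_cast at key; linarith
    have hs1 : s = 1 := by
      have h2 : (s:ℚ) < 2 := by linarith
      have h3 : s < 2 := by exact_mod_cast h2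
      omega
    have hmsq : m ^ 2 = 64 := by rw [hm8']; norm_num
    refine ⟨by omega, hs1, fun j => ?_, by omega⟩
    obtain ⟨hlo, hhi⟩ := hperterm j
    rw [hSval, hs1] at hlo hhi
    push_cast at hlo hhi
    have heq : 1 - 1/(n j : ℚ) = 1/2 := by linarith
    have hnj0 : (n j : ℚ) ≠ 0 := by have := hnq j; linarith
    have hv : (n j : ℚ) = 2 := by field_simp at heq; linarith
    exact_mod_cast hv
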